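/- Let a, b ∈ ℝ, let C be a constant skew-symmetric n×n real matrix, let 𝕌 ⊆ ℝ be a nonempty open interval on which a − bu ≠ 0, and fix u₁ ∈ 𝕌. Suppose P : 𝕌 → Sym(n,ℝ) is smooth and satisfies (a − bu)P'(u) − 2b·P(u) + P(u)C − CP(u) = 0 for all u ∈ 𝕌. Define t : 𝕌 → ℝ by t(u) = ∫_{u₁}^{u} ds/(a − bs). Then for all u ∈ 𝕌: P(u) = (a − bu)^{−2} · e^{t(u)C} · ((a − bu₁)² P(u₁)) · e^{−t(u)C}. -/

import Mathlib

open Matrix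

attribute [local instance] Matrix.normedAddCommGroup Matrix.normedSpace

set_option maxHeartbeats 1000000

noncomputable section

namespace Stmt4Aux

variable {n : ℕ}

/-- Matrix multiplication as a continuous bilinear map. -/
def mulCLM (n : ℕ) : Matrix (Fin n) (Fin n) ℝ →L[ℝ] Matrix (Fin n) (Fin n) ℝ →L[ℝ]
    Matrix (Fin n) (Fin n) ℝ :=
  LinearMap.toContinuousLinearMap
  { toFun := fun A => LinearMap.toContinuousLinearMap (LinearMap.mulLeft ℝ A)
    map_add' := by
      intro A B; ext X i j
      simp [add_mul]
    map_smul' := by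
      intro c A; ext X i j
      simp [smul_mul_assoc] }

@[simp] lemma mulCLM_apply (A B : Matrix (Fin n) (Fin n) ℝ) : mulCLM n A B = A * B := rfl

lemma _root_.HasDerivAt.matMul {f g : ℝ → Matrix (Fin n) (Fin n) ℝ} {f' g' : Matrix (Fin n) (Fin n) ℝ}
    {x : ℝ} (hf : HasDerivAt f f' x) (hg : HasDerivAt g g' x) :
    HasDerivAt (fun u => f u * g u) (f' * g x + f x * g') x := by
  letI : NormedRing (Matrix (Fin n) (Fin n) ℝ) := Matrix.linftyOpNormedRing
  letI : NormedAlgebra ℝ (Matrix (Fin n) (Fin n) ℝ) := Matrix.linftyOpNormedAlgebra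
  have h := HasDerivAt.fun_mul (c := f) (d := g) (c' := f') (d' := g') (x := x) (by exact hf) (by exact hg)
  exact h

abbrev eCLM (n : ℕ) := Matrix.toEuclideanCLM (𝕜 := ℝ) (n := Fin n)

lemma eCLM_cont : Continuous (⇑(eCLM n)) :=
  LinearMap.continuous_of_finiteDimensional
    ({ toFun := ⇑(eCLM n), map_add' := map_add _, map_smul' := map_smul _ } :
      Matrix (Fin n) (Fin n) ℝ →ₗ[ℝ] _)

lemma eCLM_exp (A : Matrix (Fin n) (Fin n) ℝ) :
    eCLM n (NormedSpace.exp A) = NormedSpace.exp (eCLM n A) := by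
  letI : SeminormedRing (Matrix (Fin n) (Fin n) ℝ) := Matrix.linftyOpSemiNormedRing
  letI : NormedRing (Matrix (Fin n) (Fin n) ℝ) := Matrix.linftyOpNormedRing
  letI : NormedAlgebra ℝ (Matrix (Fin n) (Fin n) ℝ) := Matrix.linftyOpNormedAlgebra
  letI : NormedAlgebra ℚ (Matrix (Fin n) (Fin n) ℝ) := NormedAlgebra.restrictScalars ℚ ℝ _
  haveI : @CompleteSpace (Matrix (Fin n) (Fin n) ℝ) (@PseudoMetricSpace.toUniformSpace _ (@SeminormedRing.toPseudoMetricSpace _ (Matrix.linftyOpSemiNormedRing))) := by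
    exact (inferInstance : CompleteSpace (Matrix (Fin n) (Fin n) ℝ))
  exact NormedSpace.map_exp (eCLM n) eCLM_cont A

lemma hasDerivAt_expMat (C : Matrix (Fin n) (Fin n) ℝ) (s : ℝ) :
    HasDerivAt (fun s : ℝ => NormedSpace.exp (s • C))
      (C * NormedSpace.exp (s • C)) s := by
  set e := eCLM n with he
  have h : HasDerivAt (fun s : ℝ => NormedSpace.exp (s • e C))
      (e C * NormedSpace.exp (s • e C)) s := hasDerivAt_exp_smul_const' (e C) s
  set L : (EuclideanSpace ℝ (Fin n) →L[ℝ] EuclideanSpace ℝ (Fin n)) →L[ℝ]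
      Matrix (Fin n) (Fin n) ℝ :=
    LinearMap.toContinuousLinearMap
      ({ toFun := ⇑e.symm, map_add' := map_add _, map_smul' := map_smul _ } :
        _ →ₗ[ℝ] Matrix (Fin n) (Fin n) ℝ) with hL
  have h2 : HasDerivAt (fun s : ℝ => L (NormedSpace.exp (s • e C)))
      (L (e C * NormedSpace.exp (s • e C))) s :=
    L.hasFDerivAt.comp_hasDerivAt s h
  have hLe : ∀ x, L x = e.symm x := fun _ => rfl
  have key : ∀ s : ℝ, e.symm (NormedSpace.exp (s • e C)) = NormedSpace.exp (s • C) := by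
    intro s
    rw [← _root_.map_smul, ← eCLM_exp, StarAlgEquiv.symm_apply_apply]
  have key2 : e.symm (e C * NormedSpace.exp (s • e C)) = C * NormedSpace.exp (s • C) := by
    rw [← _root_.map_smul, ← eCLM_exp, ← _root_.map_mul, StarAlgEquiv.symm_apply_apply]
  simp only [hLe, key, key2] at h2
  exact h2

lemma commute_expMat {A B : Matrix (Fin n) (Fin n) ℝ} (h : Commute A B) :
    A * NormedSpace.exp B = NormedSpace.exp B * A := by
  have hc : Commute (eCLM n A) (eCLM n B) := by
    unfold Commute SemiconjBy
    rw [← _root_.map_mul, ← _root_.map_mul, h.eq]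
  have h2 := hc.exp_right.eq
  have h3 : eCLM n (A * NormedSpace.exp B) = eCLM n (NormedSpace.exp B * A) := by
    rw [_root_.map_mul, _root_.map_mul, eCLM_exp]
    exact h2
  exact (eCLM n).injective h3

lemma expMat_neg_mul (A : Matrix (Fin n) (Fin n) ℝ) :
    NormedSpace.exp (-A) * NormedSpace.exp A = 1 := by
  rw [← Matrix.exp_add_of_commute (-A) A ((Commute.refl A).neg_left), neg_add_cancel,
    NormedSpace.exp_zero]

lemma expMat_mul_neg (A : Matrix (Fin n) (Fin n) ℝ) :
    NormedSpace.exp A * NormedSpace.exp (-A) = 1 := by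
  rw [← Matrix.exp_add_of_commute A (-A) ((Commute.refl A).neg_right), add_neg_cancel,
    NormedSpace.exp_zero]

end Stmt4Aux

open Stmt4Aux

open Stmt4Aux


/-- if `(a − bu)P' − 2bP + [P,C] = 0` on an interval `𝕌` where `a − bu ≠ 0`,
with `C` constant skew, then with `t(u) = ∫_{u₁}^u ds/(a−bs)` one has
`P(u) = (a−bu)⁻² e^{t(u)C} ((a−bu₁)² P(u₁)) e^{−t(u)C}`. -/
theorem stmt4 (n : ℕ) (hn : 1 ≤ n)
    (a b : ℝ) (C : Matrix (Fin n) (Fin n) ℝ) (hC : Cᵀ = -C)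
    (U : Set ℝ) (hUopen : IsOpen U) (hUconv : Convex ℝ U) (hUne : U.Nonempty)
    (hnz : ∀ u ∈ U, a - b * u ≠ 0)
    (u₁ : ℝ) (hu₁ : u₁ ∈ U)
    (P : ℝ → Matrix (Fin n) (Fin n) ℝ)
    (hPsmooth : ContDiffOn ℝ (⊤ : ℕ∞) P U)
    (hPsymm : ∀ u ∈ U, (P u)ᵀ = P u)
    (heq : ∀ u ∈ U,
      (a - b * u) • deriv P u - (2 * b) • P u + P u * C - C * P u = 0)
    (t : ℝ → ℝ) (ht : ∀ u, t u = ∫ s in u₁..u, (a - b * s)⁻¹) :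
    ∀ u ∈ U, P u = ((a - b * u) ^ 2)⁻¹ •
      (NormedSpace.exp (t u • C) * (((a - b * u₁) ^ 2) • P u₁) *
        NormedSpace.exp (-(t u • C))) := by
  -- derivative of t
  have hcontf : ContinuousOn (fun s : ℝ => (a - b * s)⁻¹) U :=
    ((continuous_const.sub (continuous_const.mul continuous_id)).continuousOn).inv₀ hnz
  have ht' : ∀ v ∈ U, HasDerivAt t (a - b * v)⁻¹ v := by
    intro v hv
    have hsub : Set.uIcc u₁ v ⊆ U := hUconv.ordConnected.uIcc_subset hu₁ hv
    have hi : IntervalIntegrable (fun s : ℝ => (a - b * s)⁻¹) MeasureTheory.volume u₁ v :=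
      (hcontf.mono hsub).intervalIntegrable
    have hm : StronglyMeasurableAtFilter (fun s : ℝ => (a - b * s)⁻¹) (nhds v) :=
      hcontf.stronglyMeasurableAtFilter hUopen v hv
    have hc : ContinuousAt (fun s : ℝ => (a - b * s)⁻¹) v :=
      hcontf.continuousAt (hUopen.mem_nhds hv)
    have h := intervalIntegral.integral_hasDerivAt_right hi hm hc
    have htfun : t = fun x => ∫ s in u₁..x, (a - b * s)⁻¹ := funext ht
    rw [htfun]
    exact h
  -- the exponentials
  set E : ℝ → Matrix (Fin n) (Fin n) ℝ := fun v => NormedSpace.exp (t v • C) with hEdef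
  set F : ℝ → Matrix (Fin n) (Fin n) ℝ := fun v => NormedSpace.exp (t v • (-C)) with hFdef
  have hE' : ∀ v ∈ U, HasDerivAt E ((a - b * v)⁻¹ • (C * E v)) v := by
    intro v hv
    have := (HasDerivAt.scomp v (hasDerivAt_expMat C (t v)) (ht' v hv))
    simp only [Function.comp_def] at this
    exact this
  have hF' : ∀ v ∈ U, HasDerivAt F ((a - b * v)⁻¹ • ((-C) * F v)) v := by
    intro v hv
    have := (HasDerivAt.scomp v (hasDerivAt_expMat (-C) (t v)) (ht' v hv))
    simp only [Function.comp_def] at this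
    exact this
  have hFE : ∀ v, F v * E v = 1 := by
    intro v
    have : t v • (-C) = -(t v • C) := by rw [smul_neg]
    rw [hEdef, hFdef]
    simp only [this]
    exact expMat_neg_mul _
  have hEF : ∀ v, E v * F v = 1 := by
    intro v
    have : t v • (-C) = -(t v • C) := by rw [smul_neg]
    rw [hEdef, hFdef]
    simp only [this]
    exact expMat_mul_neg _
  have hCF : ∀ v, C * F v = F v * C :=
    fun v => commute_expMat (((Commute.refl C).neg_right).smul_right (t v))
  -- Q and its derivative
  set Q : ℝ → Matrix (Fin n) (Fin n) ℝ :=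
    fun v => ((a - b * v) ^ 2) • (F v * P v * E v) with hQdef
  have hQ' : ∀ v ∈ U, HasDerivAt Q 0 v := by
    intro v hv
    have hα : a - b * v ≠ 0 := hnz v hv
    have hP : HasDerivAt P (deriv P v) v :=
      (((hPsmooth.differentiableOn (by simp)).differentiableAt (hUopen.mem_nhds hv)).hasDerivAt)
    have hlin : HasDerivAt (fun v : ℝ => a - b * v) (-b) v := by
      simpa using ((hasDerivAt_id v).const_mul b).const_sub a
    have hsq : HasDerivAt (fun v : ℝ => (a - b * v) ^ 2)
        ((2 : ℕ) * (a - b * v) ^ 1 * (-b)) v := hlin.pow 2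
    have hprod := ((hF' v hv).matMul hP).matMul (hE' v hv)
    have hQ := hsq.smul hprod
    have hzero :
        ((a - b * v) ^ 2) •
            (((a - b * v)⁻¹ • ((-C) * F v) * P v + F v * deriv P v) * E v +
              F v * P v * ((a - b * v)⁻¹ • (C * E v))) +
          ((2 : ℕ) * (a - b * v) ^ 1 * (-b)) • (F v * P v * E v) = 0 := by
      have hαα : (a - b * v) ^ 2 * (a - b * v)⁻¹ = a - b * v := by
        rw [sq, mul_assoc, mul_inv_cancel₀ hα, mul_one]
      calc ((a - b * v) ^ 2) •
            (((a - b * v)⁻¹ • ((-C) * F v) * P v + F v * deriv P v) * E v +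
              F v * P v * ((a - b * v)⁻¹ • (C * E v))) +
          ((2 : ℕ) * (a - b * v) ^ 1 * (-b)) • (F v * P v * E v)
          = (a - b * v) •
              (F v * ((a - b * v) • deriv P v - (2 * b) • P v + P v * C - C * P v) * E v) := by
            simp only [neg_mul, hCF v, smul_mul_assoc, mul_smul_comm, smul_smul, smul_add,
              smul_sub, mul_add, add_mul, mul_sub, sub_mul, neg_smul, mul_assoc, pow_one,
              Nat.cast_ofNat, hαα]
            module
        _ = 0 := by rw [heq v hv]; simp
    rw [hQdef]
    have hres := hsq.smul hprod
    rw [hzero] at hres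
    exact hres
  -- Q is constant
  have hQdiff : DifferentiableOn ℝ Q U :=
    fun v hv => ((hQ' v hv).differentiableAt).differentiableWithinAt
  have hQfd : ∀ v ∈ U, fderivWithin ℝ Q U v = 0 := by
    intro v hv
    rw [fderivWithin_of_isOpen hUopen hv, (hQ' v hv).hasFDerivAt.fderiv]
    ext x i j
    simp
  have hconst : ∀ v ∈ U, Q v = Q u₁ := fun v hv =>
    hUconv.is_const_of_fderivWithin_eq_zero hQdiff hQfd hv hu₁
  have ht1 : t u₁ = 0 := by rw [ht]; exact intervalIntegral.integral_same
  have hQ1 : Q u₁ = ((a - b * u₁) ^ 2) • P u₁ := by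
    simp only [hQdef, hEdef, hFdef, ht1, zero_smul, NormedSpace.exp_zero, one_mul, mul_one]
  have hFneg : ∀ v, NormedSpace.exp (-(t v • C)) = F v := by
    intro v
    rw [hFdef]
    simp only [smul_neg]
  intro u hu
  have hα : a - b * u ≠ 0 := hnz u hu
  have hQu := hconst u hu
  rw [hQ1] at hQu
  rw [hFneg u, ← hQu, hQdef]
  have hy : E u * (F u * P u * E u) * F u = P u := by
    rw [show F u * P u * E u = F u * (P u * E u) from mul_assoc _ _ _,
      ← mul_assoc (E u), hEF, one_mul, mul_assoc, hEF, mul_one]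
  rw [mul_smul_comm, smul_mul_assoc, smul_smul, hy,
    inv_mul_cancel₀ (pow_ne_zero 2 hα), one_smul]
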